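/- Let α, β ∈ ℝ, F(x) = αx + β, and C = [-1, 1]. Then F is strongly pseudomonotone on C (i.e., there exists γ > 0 with the strong pseudomonotonicity property) if and only if α + β > 0 or α - β > 0. -/
import Mathlib


theorem stmt_9 (α β : ℝ) :
    (∃ γ > (0:ℝ), ∀ x ∈ Set.Icc (-1:ℝ) 1, ∀ y ∈ Set.Icc (-1:ℝ) 1,
        (α * x + β) * (y - x) ≥ 0 → (α * y + β) * (y - x) ≥ γ * (y - x)^2)
      ↔ (α + β > 0 ∨ α - β > 0) := by
  constructor
  · rintro ⟨γ, hγ, h⟩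
    by_contra hc
    push_neg at hc
    obtain ⟨h1, h2⟩ := hc
    have hα : α ≤ 0 := by linarith
    rcases eq_or_lt_of_le hα with hα0 | hαneg
    · -- α = 0, β = 0
      have hβ1 : β ≤ 0 := by linarith
      have hβ2 : 0 ≤ β := by linarith
      have := h 0 (by norm_num) 1 (by norm_num) (by nlinarith)
      nlinarith
    · -- α < 0, root x0 = -β/α ∈ [-1,1]
      set x0 : ℝ := -β / α with hx0
      have hne : α ≠ 0 := ne_of_lt hαneg
      have hroot : α * x0 + β = 0 := by
        rw [hx0]; field_simp; ring
      have hmem : x0 ∈ Set.Icc (-1:ℝ) 1 := by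
        constructor
        · rw [hx0, le_div_iff_of_neg hαneg]; linarith
        · rw [hx0, div_le_iff_of_neg hαneg]; linarith
      by_cases hs : x0 ≤ 0
      · have h1m : (1:ℝ) ∈ Set.Icc (-1:ℝ) 1 := by norm_num
        have key := h x0 hmem 1 h1m (by rw [hroot]; ring_nf; simp)
        have hy : α * 1 + β = α * (1 - x0) := by
          have : β = -α * x0 := by linarith
          rw [this]; ring
        rw [hy] at key
        nlinarith [sq_nonneg (1 - x0)]
      · push_neg at hs
        have h1m : (-1:ℝ) ∈ Set.Icc (-1:ℝ) 1 := by norm_num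
        have key := h x0 hmem (-1) h1m (by rw [hroot]; ring_nf; simp)
        have hy : α * (-1) + β = α * (-1 - x0) := by
          have : β = -α * x0 := by linarith
          rw [this]; ring
        rw [hy] at key
        nlinarith [sq_nonneg (-1 - x0)]
  · rintro (hpos | hpos)
    · rcases lt_or_ge 0 α with hα | hα
      · refine ⟨α, hα, ?_⟩
        rintro x ⟨hx1, hx2⟩ y ⟨hy1, hy2⟩ hxy
        nlinarith [sq_nonneg (y - x)]
      · refine ⟨(α + β) / 2, by linarith, ?_⟩
        rintro x ⟨hx1, hx2⟩ y ⟨hy1, hy2⟩ hxy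
        have hFx : α * x + β ≥ α + β := by nlinarith
        have hyx : y - x ≥ 0 := by nlinarith
        have hFy : α * y + β ≥ α + β := by nlinarith
        nlinarith [mul_le_mul_of_nonneg_right hFy hyx,
          mul_nonneg hpos.le (mul_nonneg hyx (by linarith : (0:ℝ) ≤ 2 - (y - x)))]
    · rcases lt_or_ge 0 α with hα | hα
      · refine ⟨α, hα, ?_⟩
        rintro x ⟨hx1, hx2⟩ y ⟨hy1, hy2⟩ hxy
        nlinarith [sq_nonneg (y - x)]
      · refine ⟨(α - β) / 2, by linarith, ?_⟩
        rintro x ⟨hx1, hx2⟩ y ⟨hy1, hy2⟩ hxy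
        have hFx : α * x + β ≤ -(α - β) := by nlinarith
        have hyx : y - x ≤ 0 := by nlinarith
        have hFy : α * y + β ≤ -(α - β) := by nlinarith
        nlinarith [mul_le_mul_of_nonneg_right hFy (by linarith : (0:ℝ) ≤ x - y),
          mul_nonneg hpos.le (mul_nonneg (by linarith : (0:ℝ) ≤ x - y) (by linarith : (0:ℝ) ≤ 2 - (x - y)))]
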